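/- Let a, c ≥ 1 and let M = I_{a+1+c} + [[0,0,I_c],[0,I_1,0],[I_a,0,0]] (block matrix with blocks of sizes c, 1, a along the diagonal and antidiagonal identity blocks). Set p = a+1, q = c+1, Δ = gcd(p,q), and write p = xΔ, q = yΔ. Then the corank of M equals Δ − 1 if x + y is even, and equals 1 if x + y is odd. -/

import Mathlib

set_option linter.unusedSectionVars false
set_option linter.unnecessarySeqFocus false
set_option maxHeartbeats 1000000

noncomputable section

/-- The matrix `w([a,ε_a];[b,ε_b];[c,ε_c]) = I_{a+b+c} + K`, where `K` is the
block matrix `[[0,0,ε_c I_c],[0,ε_b I_b,0],[ε_a I_a,0,0]]` with row blocks of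
sizes `(c, b, a)` and column blocks of sizes `(a, b, c)`; blocks of size `0`
are omitted. -/
def wMat (a b c : ℕ) (εa εb εc : ℚ) :
    Matrix (Fin (a + b + c)) (Fin (a + b + c)) ℚ :=
  1 + Matrix.of (fun i j =>
    if i.1 < c ∧ j.1 = i.1 + a + b then εc
    else if c ≤ i.1 ∧ i.1 < c + b ∧ j.1 + c = i.1 + a then εb
    else if c + b ≤ i.1 ∧ j.1 + c + b = i.1 then εa else 0)

/-- The corank of a square rational matrix: the dimension of its null space. -/
def corank {m : ℕ} (A : Matrix (Fin m) (Fin m) ℚ) : ℕ :=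
  Module.finrank ℚ (LinearMap.ker (Matrix.toLin' A))



private lemma negpow_congr {k l : ℕ} (h : k % 2 = l % 2) : (-1 : ℚ)^k = (-1 : ℚ)^l := by
  rcases Nat.even_or_odd k with hk | hk
  · have hl : Even l := by rw [Nat.even_iff] at hk ⊢; omega
    rw [hk.neg_one_pow, hl.neg_one_pow]
  · have hl : Odd l := by rw [Nat.odd_iff] at hk ⊢; omega
    rw [hk.neg_one_pow, hl.neg_one_pow]

section cycle

variable {p q Δ x y s w : ℕ}

private lemma cancel_w (hw : x * w % s = 1) {A B : ℕ}
    (h : A * w % s = B * w % s) : A % s = B % s := by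
  have key : ∀ C : ℕ, C % s = (C * w % s) * x % s := by
    intro C
    calc C % s = C % s * 1 % s := by rw [mul_one, Nat.mod_mod_of_dvd _ dvd_rfl]
      _ = C % s * (x * w % s) % s := by rw [hw]
      _ = C * (x * w) % s := (Nat.mul_mod C (x*w) s).symm
      _ = C * w * x % s := by rw [show C * (x * w) = C * w * x from by ring]
      _ = (C * w % s) * x % s := (Nat.mod_mul_mod _ _ _).symm
  rw [key A, key B, h]

private lemma cancel_x (hw : x * w % s = 1) {A B : ℕ}
    (h : A * x % s = B * x % s) : A % s = B % s := by
  have key : ∀ C : ℕ, C % s = (C * x % s) * w % s := by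
    intro C
    calc C % s = C % s * 1 % s := by rw [mul_one, Nat.mod_mod_of_dvd _ dvd_rfl]
      _ = C % s * (x * w % s) % s := by rw [hw]
      _ = C * (x * w) % s := (Nat.mul_mod C (x*w) s).symm
      _ = C * x * w % s := by rw [show C * (x * w) = C * x * w from by ring]
      _ = (C * x % s) * w % s := (Nat.mod_mul_mod _ _ _).symm
  rw [key A, key B, h]

variable (hp : 2 ≤ p) (hq : 2 ≤ q) (hΔ : 0 < Δ)
  (hxd : x * Δ = p) (hyd : y * Δ = q) (hsd : s = x + y) (hw : x * w % s = 1)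

include hp hq hΔ hxd hyd hsd in
private lemma basics : 1 ≤ x ∧ 1 ≤ y ∧ 2 ≤ s ∧ p + q = s * Δ ∧ Δ ≤ p ∧ Δ ≤ q := by
  have hx : 1 ≤ x := by
    rcases Nat.eq_zero_or_pos x with h | h
    · subst h; simp at hxd; omega
    · exact h
  have hy : 1 ≤ y := by
    rcases Nat.eq_zero_or_pos y with h | h
    · subst h; simp at hyd; omega
    · exact h
  have hN : p + q = s * Δ := by rw [hsd, add_mul, hxd, hyd]
  have h1 : Δ ≤ x * Δ := Nat.le_mul_of_pos_left Δ hx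
  have h2 : Δ ≤ y * Δ := Nat.le_mul_of_pos_left Δ hy
  exact ⟨hx, hy, by omega, hN, by omega, by omega⟩

include hxd in
private lemma mod_class_p (j k : ℕ) : (j + k * p) % Δ = j % Δ := by
  rw [← hxd, show j + k * (x * Δ) = j + (k * x) * Δ from by ring, Nat.add_mul_mod_self_right]

include hp hq hΔ hxd hyd hsd in
private lemma mod_class_pq (j : ℕ) : (j % (p + q)) % Δ = j % Δ := by
  obtain ⟨hx, hy, hs, hN, hΔp, hΔq⟩ := basics hp hq hΔ hxd hyd hsd
  exact Nat.mod_mod_of_dvd j ⟨s, by rw [hN]; ring⟩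

private lemma lastmod (hΔ : 0 < Δ) {m : ℕ} (hm : 1 ≤ m) : (m * Δ - 1) % Δ = Δ - 1 := by
  have h2 : (m - 1) * Δ = m * Δ - Δ := Nat.sub_one_mul m Δ
  have h3 : Δ ≤ m * Δ := Nat.le_mul_of_pos_left Δ hm
  have h1 : m * Δ - 1 = Δ * (m - 1) + (Δ - 1) := by rw [mul_comm Δ]; omega
  rw [h1, Nat.mul_add_mod]
  exact Nat.mod_eq_of_lt (by omega)

include hp hq in
private lemma ustep (u : ℕ → ℚ)
    (hR1 : ∀ j, j + 1 < q → u j + u (j + p) = 0)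
    (hR3 : ∀ j, q ≤ j → j + 1 < p + q → u j + u (j - q) = 0)
    {j : ℕ} (hj : j + 1 < p + q) (hne : j ≠ q - 1) :
    u ((j + p) % (p + q)) = - u j := by
  by_cases h : j + 1 < q
  · rw [Nat.mod_eq_of_lt (by omega)]
    linarith [hR1 j h]
  · have hge : q ≤ j := by omega
    have h2 : j + p = (p + q) + (j - q) := by omega
    rw [h2, Nat.add_mod_left, Nat.mod_eq_of_lt (by omega)]
    linarith [hR3 j hge hj]

include hq in
private lemma E_succ (r k : ℕ) :
    (r + (k + 1) * p) % (p + q) = ((r + k * p) % (p + q) + p) % (p + q) := by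
  conv_lhs => rw [show r + (k + 1) * p = (r + k * p) + p from by ring,
    Nat.add_mod (r + k * p) p (p + q)]
  rw [Nat.mod_eq_of_lt (show p < p + q by omega)]

include hxd hyd hsd in
private lemma keymul (k : ℕ) : k * p % (p + q) = (k * x % s) * Δ := by
  have hN : p + q = s * Δ := by rw [hsd, add_mul, hxd, hyd]
  rw [hN, ← hxd, show k * (x * Δ) = (k * x) * Δ from by ring, Nat.mul_mod_mul_right]

include hp hq hΔ hxd hyd hsd in
private lemma prop1 (u : ℕ → ℚ)
    (hR1 : ∀ j, j + 1 < q → u j + u (j + p) = 0)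
    (hR3 : ∀ j, q ≤ j → j + 1 < p + q → u j + u (j - q) = 0)
    {r : ℕ} (hr : r + 1 < Δ) :
    ∀ k, u ((r + k * p) % (p + q)) = (-1)^k * u r := by
  obtain ⟨hx, hy, hs, hN, hΔp, hΔq⟩ := basics hp hq hΔ hxd hyd hsd
  intro k
  induction k with
  | zero =>
    rw [show r + 0 * p = r from by ring, Nat.mod_eq_of_lt (show r < p + q by omega),
      pow_zero, one_mul]
  | succ k ih =>
    set j := (r + k * p) % (p + q) with hj
    have hjlt : j < p + q := Nat.mod_lt _ (by omega)
    have hjm : j % Δ = r := by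
      rw [hj, mod_class_pq hp hq hΔ hxd hyd hsd, mod_class_p hxd,
        Nat.mod_eq_of_lt (by omega)]
    have hjne : j ≠ q - 1 := by
      intro h
      have := lastmod hΔ hy
      rw [hyd] at this
      rw [h, this] at hjm; omega
    have hjlt2 : j + 1 < p + q := by
      rcases Nat.lt_or_ge (j + 1) (p + q) with h | h
      · exact h
      · exfalso
        have hje : j = s * Δ - 1 := by omega
        have := lastmod hΔ (show 1 ≤ s by omega)
        rw [hje, this] at hjm; omega
    rw [E_succ hq, ← hj, ustep hp hq u hR1 hR3 hjlt2 hjne, ih]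
    ring

include hp hq hΔ hxd hyd hsd hw in
private lemma surj1 {r j : ℕ} (hj : j < p + q) (hjm : j % Δ = r) :
    ∃ k, k < s ∧ k * x % s = j / Δ ∧ (r + k * p) % (p + q) = j := by
  obtain ⟨hx, hy, hs, hN, hΔp, hΔq⟩ := basics hp hq hΔ hxd hyd hsd
  refine ⟨(j / Δ * w) % s, Nat.mod_lt _ (by omega), ?_⟩
  have hkx : ((j / Δ * w) % s) * x % s = j / Δ := by
    rw [Nat.mod_mul_mod, show j / Δ * w * x = j / Δ * (x * w) from by ring,
      Nat.mul_mod (j / Δ) (x * w), hw, mul_one, Nat.mod_mod_of_dvd _ dvd_rfl]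
    exact Nat.mod_eq_of_lt (by rw [Nat.div_lt_iff_lt_mul hΔ]; omega)
  refine ⟨hkx, ?_⟩
  have h1 : ((j / Δ * w) % s) * p % (p + q) = j - r := by
    rw [keymul hxd hyd hsd, hkx]
    have h2 := Nat.div_add_mod j Δ
    have h3 : Δ * (j / Δ) = (j / Δ) * Δ := mul_comm _ _
    omega
  have hrj : r ≤ j := by have := Nat.mod_le j Δ; omega
  rw [Nat.add_mod r _ (p + q), h1, Nat.mod_eq_of_lt (show r < p + q by omega),
    show r + (j - r) = j from by omega]
  exact Nat.mod_eq_of_lt hj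

include hp hq hΔ hxd hyd hsd hw in
private lemma charE' {k : ℕ} (hk : k + 1 < s) :
    1 ≤ (k + 1) * x % s ∧
    (p - 1 + k * p) % (p + q) = ((k + 1) * x % s) * Δ - 1 := by
  obtain ⟨hx, hy, hs, hN, hΔp, hΔq⟩ := basics hp hq hΔ hxd hyd hsd
  have ht0 : (k + 1) * x % s ≠ 0 := by
    intro h0
    have hz : (0 : ℕ) * x % s = 0 := by simp
    have := cancel_x hw (A := k + 1) (B := 0) (by rw [h0, hz])
    rw [Nat.mod_eq_of_lt (by omega)] at this
    simp at this
  set t := (k + 1) * x % s with htdef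
  have htlt : t < s := Nat.mod_lt _ (by omega)
  have hkey : (k + 1) * p % (p + q) = t * Δ := keymul hxd hyd hsd (k + 1)
  have hB := Nat.div_add_mod ((k + 1) * p) (p + q)
  have h1 : p - 1 + k * p = (k + 1) * p - 1 := by
    have : (k + 1) * p = k * p + p := by ring
    omega
  have htΔ : 1 ≤ t * Δ := by
    have : 1 * 1 ≤ t * Δ := Nat.mul_le_mul (by omega) (by omega)
    omega
  have h2 : (k + 1) * p - 1 = (p + q) * ((k + 1) * p / (p + q)) + (t * Δ - 1) := by omega
  have h4 : t * Δ - 1 < p + q := by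
    have : t * Δ < s * Δ := by
      have := Nat.mul_le_mul_right Δ (show t + 1 ≤ s by omega)
      have h5 : (t + 1) * Δ = t * Δ + Δ := by ring
      omega
    omega
  rw [h1, h2, Nat.mul_add_mod]
  exact ⟨by omega, Nat.mod_eq_of_lt h4⟩

include hp hq hΔ hxd hyd hsd in
private lemma smul_val : (s - 1) * x % s = y := by
  obtain ⟨hx, hy, hs, hN, hΔp, hΔq⟩ := basics hp hq hΔ hxd hyd hsd
  have e1 : (s - 1) * x = s * (x - 1) + y := by
    have a1 : (s - 1) * x = s * x - x := Nat.sub_one_mul s x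
    have a2 : s * (x - 1) = s * x - s := by rw [Nat.mul_sub, mul_one]
    have a4 : s ≤ s * x := Nat.le_mul_of_pos_right s hx
    omega
  rw [e1, Nat.mul_add_mod]
  exact Nat.mod_eq_of_lt (by omega)

include hp hq hΔ hxd hyd hsd hw in
private lemma prop2 (u : ℕ → ℚ)
    (hR1 : ∀ j, j + 1 < q → u j + u (j + p) = 0)
    (hR3 : ∀ j, q ≤ j → j + 1 < p + q → u j + u (j - q) = 0) :
    ∀ k, k < s - 1 → u ((p - 1 + k * p) % (p + q)) = (-1)^k * u (p - 1) := by
  obtain ⟨hx, hy, hs, hN, hΔp, hΔq⟩ := basics hp hq hΔ hxd hyd hsd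
  intro k
  induction k with
  | zero =>
    intro _
    rw [show p - 1 + 0 * p = p - 1 from by ring,
      Nat.mod_eq_of_lt (show p - 1 < p + q by omega), pow_zero, one_mul]
  | succ k ih =>
    intro hk1
    obtain ⟨ht1, hchar⟩ := charE' hp hq hΔ hxd hyd hsd hw (k := k) (by omega)
    set j := (p - 1 + k * p) % (p + q) with hj
    set t := (k + 1) * x % s with htdef
    have htlt : t < s := Nat.mod_lt _ (by omega)
    have hjq : j ≠ q - 1 := by
      intro h
      have hty : t = y := by
        have h1 : t * Δ = y * Δ := by omega
        exact Nat.eq_of_mul_eq_mul_right hΔ h1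
      have hsm : (s - 1) * x % s = y := smul_val hp hq hΔ hxd hyd hsd
      have := cancel_x hw (A := k + 1) (B := s - 1) (by rw [← htdef, hty, hsm])
      rw [Nat.mod_eq_of_lt (show k + 1 < s by omega),
        Nat.mod_eq_of_lt (show s - 1 < s by omega)] at this
      omega
    have hjlt2 : j + 1 < p + q := by
      have : t * Δ < s * Δ := by
        have := Nat.mul_le_mul_right Δ (show t + 1 ≤ s by omega)
        have h5 : (t + 1) * Δ = t * Δ + Δ := by ring
        omega
      omega
    rw [E_succ hq, ← hj, ustep hp hq u hR1 hR3 hjlt2 hjq, ih (by omega)]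
    ring

include hp hq hΔ hxd hyd hsd hw in
private lemma Esm2 : (p - 1 + (s - 2) * p) % (p + q) = q - 1 := by
  obtain ⟨hx, hy, hs, hN, hΔp, hΔq⟩ := basics hp hq hΔ hxd hyd hsd
  obtain ⟨h1, h2⟩ := charE' hp hq hΔ hxd hyd hsd hw (k := s - 2) (by omega)
  rw [show s - 2 + 1 = s - 1 from by omega] at h1 h2
  rw [h2, smul_val hp hq hΔ hxd hyd hsd, hyd]

include hp hq hΔ hxd hyd hsd hw in
private lemma even_base_zero (hs2 : s % 2 = 0) (u : ℕ → ℚ)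
    (hR1 : ∀ j, j + 1 < q → u j + u (j + p) = 0)
    (hR2 : u (q - 1) + u (p - 1) = 0)
    (hR3 : ∀ j, q ≤ j → j + 1 < p + q → u j + u (j - q) = 0) :
    u (p - 1) = 0 := by
  obtain ⟨hx, hy, hs, hN, hΔp, hΔq⟩ := basics hp hq hΔ hxd hyd hsd
  have hprop := prop2 hp hq hΔ hxd hyd hsd hw u hR1 hR3 (s - 2) (by omega)
  rw [Esm2 hp hq hΔ hxd hyd hsd hw] at hprop
  have he : (-1 : ℚ)^(s - 2) = 1 := Even.neg_one_pow (Nat.even_iff.2 (by omega))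
  rw [he, one_mul] at hprop
  linarith

include hp hq hΔ hxd hyd hsd hw in
private lemma surj2 {j : ℕ} (hj : j + 1 < p + q) (hjm : j % Δ = Δ - 1) :
    ((j + 1) / Δ * w) % s - 1 < s - 1 ∧ 1 ≤ ((j + 1) / Δ * w) % s ∧
    (p - 1 + (((j + 1) / Δ * w) % s - 1) * p) % (p + q) = j := by
  obtain ⟨hx, hy, hs, hN, hΔp, hΔq⟩ := basics hp hq hΔ hxd hyd hsd
  have hdvd : Δ ∣ j + 1 := by
    refine ⟨j / Δ + 1, ?_⟩
    have a1 := Nat.div_add_mod j Δ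
    have a2 : Δ * (j / Δ + 1) = Δ * (j / Δ) + Δ := by ring
    omega
  set A := (j + 1) / Δ with hA
  have hAΔ : A * Δ = j + 1 := Nat.div_mul_cancel hdvd
  have hA1 : 1 ≤ A := by
    rcases Nat.eq_zero_or_pos A with h | h
    · rw [h] at hAΔ; simp at hAΔ
    · exact h
  have hAs : A < s := by
    by_contra h
    push_neg at h
    have : s * Δ ≤ A * Δ := Nat.mul_le_mul_right Δ h
    omega
  set t := (A * w) % s with ht
  have ht1 : 1 ≤ t := by
    rcases Nat.eq_zero_or_pos t with h | h
    · exfalso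
      have hz : (0 : ℕ) * w % s = 0 := by simp
      have := cancel_w hw (A := A) (B := 0) (by rw [← ht, h, hz])
      rw [Nat.mod_eq_of_lt hAs] at this
      simp at this
      omega
    · exact h
  have hts : t < s := Nat.mod_lt _ (by omega)
  obtain ⟨h1', h2'⟩ := charE' hp hq hΔ hxd hyd hsd hw (k := t - 1) (by omega)
  rw [show t - 1 + 1 = t from by omega] at h1' h2'
  have htx : t * x % s = A := by
    rw [ht, Nat.mod_mul_mod, show A * w * x = A * (x * w) from by ring,
      Nat.mul_mod A (x * w), hw, mul_one, Nat.mod_mod_of_dvd _ dvd_rfl]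
    exact Nat.mod_eq_of_lt hAs
  rw [htx] at h2'
  exact ⟨by omega, ht1, by rw [h2']; omega⟩

include hp hq hΔ hxd hyd hsd hw in
private lemma class_vanish_even (hs2 : s % 2 = 0) (u : ℕ → ℚ)
    (hR1 : ∀ j, j + 1 < q → u j + u (j + p) = 0)
    (hR2 : u (q - 1) + u (p - 1) = 0)
    (hR3 : ∀ j, q ≤ j → j + 1 < p + q → u j + u (j - q) = 0)
    {j : ℕ} (hj : j + 1 < p + q) (hjm : j % Δ = Δ - 1) : u j = 0 := by
  obtain ⟨hk, ht1, hE⟩ := surj2 hp hq hΔ hxd hyd hsd hw hj hjm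
  have hprop := prop2 hp hq hΔ hxd hyd hsd hw u hR1 hR3 _ hk
  rw [hE] at hprop
  rw [hprop, even_base_zero hp hq hΔ hxd hyd hsd hw hs2 u hR1 hR2 hR3]
  ring

include hp hq hΔ hxd hyd hsd hw in
private lemma class_formula (u : ℕ → ℚ)
    (hR1 : ∀ j, j + 1 < q → u j + u (j + p) = 0)
    (hR3 : ∀ j, q ≤ j → j + 1 < p + q → u j + u (j - q) = 0)
    {j : ℕ} (hj : j + 1 < p + q) (hjm : j % Δ = Δ - 1) :
    u j = (-1)^(((j + 1) / Δ * w) % s - 1) * u (p - 1) := by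
  obtain ⟨hk, ht1, hE⟩ := surj2 hp hq hΔ hxd hyd hsd hw hj hjm
  have hprop := prop2 hp hq hΔ hxd hyd hsd hw u hR1 hR3 _ hk
  rw [hE] at hprop
  exact hprop

include hp hq hΔ hxd hyd hsd hw in
private lemma nonclass_vanish_odd (hs2 : s % 2 = 1) (u : ℕ → ℚ)
    (hR1 : ∀ j, j + 1 < q → u j + u (j + p) = 0)
    (hR3 : ∀ j, q ≤ j → j + 1 < p + q → u j + u (j - q) = 0)
    {j : ℕ} (hj : j < p + q) (hne : j % Δ ≠ Δ - 1) : u j = 0 := by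
  obtain ⟨hx, hy, hs, hN, hΔp, hΔq⟩ := basics hp hq hΔ hxd hyd hsd
  set r := j % Δ with hr0
  have hr : r + 1 < Δ := by
    have : r < Δ := Nat.mod_lt _ hΔ
    omega
  obtain ⟨k, hk, hkx, hE⟩ := surj1 hp hq hΔ hxd hyd hsd hw hj rfl
  have hur : u r = 0 := by
    have h1 := prop1 hp hq hΔ hxd hyd hsd u hR1 hR3 hr s
    have hE0 : (r + s * p) % (p + q) = r := by
      rw [show s * p = x * (p + q) from by rw [hN, ← hxd]; ring,
        Nat.add_mul_mod_self_right]
      exact Nat.mod_eq_of_lt (by omega)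
    rw [hE0] at h1
    rw [Odd.neg_one_pow (Nat.odd_iff.2 hs2)] at h1
    linarith
  have h2 := prop1 hp hq hΔ hxd hyd hsd u hR1 hR3 hr k
  rw [hE] at h2
  rw [h2, hur]
  ring

include hp hq hΔ hxd hyd hsd hw in
private lemma even_formula (hs2 : s % 2 = 0) (u : ℕ → ℚ)
    (hR1 : ∀ j, j + 1 < q → u j + u (j + p) = 0)
    (hR3 : ∀ j, q ≤ j → j + 1 < p + q → u j + u (j - q) = 0)
    {j : ℕ} (hj : j < p + q) (hne : j % Δ + 1 < Δ) :
    u j = (-1)^(j / Δ) * u (j % Δ) := by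
  obtain ⟨hx, hy, hs, hN, hΔp, hΔq⟩ := basics hp hq hΔ hxd hyd hsd
  obtain ⟨k, hk, hkx, hE⟩ := surj1 hp hq hΔ hxd hyd hsd hw hj rfl
  have h1 := prop1 hp hq hΔ hxd hyd hsd u hR1 hR3 hne k
  rw [hE] at h1
  have hx2 : x % 2 = 1 := by
    by_contra h
    have hxe : x % 2 = 0 := by omega
    have hd := Nat.div_add_mod (x * w) s
    rw [hw] at hd
    have e1 : (x * w) % 2 = 0 := by rw [Nat.mul_mod, hxe]; simp
    have e2 : (s * (x * w / s)) % 2 = 0 := by rw [Nat.mul_mod, hs2]; simp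
    omega
  have e1 : k * x % 2 = k % 2 := by
    rw [Nat.mul_mod, hx2, mul_one, Nat.mod_mod_of_dvd _ dvd_rfl]
  have e2 := Nat.div_add_mod (k * x) s
  rw [hkx] at e2
  have e3 : (s * (k * x / s)) % 2 = 0 := by rw [Nat.mul_mod, hs2]; simp
  have hpar : k % 2 = (j / Δ) % 2 := by omega
  rw [h1, negpow_congr hpar]


private lemma even_g_R1 (hΔ : 0 < Δ) (hxd : x * Δ = p) (hx2 : x % 2 = 1)
    (W : ℕ → ℚ) (j : ℕ) :
    (-1:ℚ)^((j + p)/Δ) * W ((j + p) % Δ) = -((-1:ℚ)^(j/Δ) * W (j % Δ)) := by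
  rw [← hxd, Nat.add_mul_div_right j x hΔ, Nat.add_mul_mod_self_right,
    pow_add, Odd.neg_one_pow (Nat.odd_iff.2 hx2)]
  ring

private lemma even_g_R3 (hΔ : 0 < Δ) (hyd : y * Δ = q) (hy2 : y % 2 = 1)
    (W : ℕ → ℚ) {j : ℕ} (hjq : q ≤ j) :
    (-1:ℚ)^((j - q)/Δ) * W ((j - q) % Δ) = -((-1:ℚ)^(j/Δ) * W (j % Δ)) := by
  have hmod : (j - q) % Δ = j % Δ := by
    conv_rhs => rw [show j = (j - q) + y * Δ from by omega]
    rw [Nat.add_mul_mod_self_right]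
  have hdiv : j / Δ = (j - q)/Δ + y := by
    conv_lhs => rw [show j = (j - q) + y * Δ from by omega]
    rw [Nat.add_mul_div_right _ y hΔ]
  rw [hmod, hdiv, pow_add, Odd.neg_one_pow (Nat.odd_iff.2 hy2)]
  ring

private lemma even_g_class0 (hΔ : 0 < Δ) (W : ℕ → ℚ) (hW : W (Δ - 1) = 0)
    {m : ℕ} (hm : 1 ≤ m) :
    (-1:ℚ)^((m * Δ - 1)/Δ) * W ((m * Δ - 1) % Δ) = 0 := by
  rw [lastmod hΔ hm, hW, mul_zero]

include hsd hw in
private lemma yw_val (hs : 2 ≤ s) : y * w % s = s - 1 := by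
  have h0 : (y * w + x * w) % s = 0 := by
    rw [show y * w + x * w = s * w from by rw [hsd]; ring, Nat.mul_mod_right]
  rw [Nat.add_mod, hw] at h0
  have hlt : y * w % s < s := Nat.mod_lt _ (by omega)
  rcases Nat.lt_or_ge (y * w % s + 1) s with h | h
  · rw [Nat.mod_eq_of_lt h] at h0
    omega
  · omega

include hp hq hΔ hxd hyd hsd hw in
private lemma tfacts {j : ℕ} (hj : j + 1 < p + q) (hjm : j % Δ = Δ - 1) :
    ((j + 1)/Δ) * Δ = j + 1 ∧ 1 ≤ (j + 1)/Δ ∧ (j + 1)/Δ < s ∧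
    1 ≤ ((j + 1)/Δ * w) % s ∧ ((j + 1)/Δ * w) % s < s ∧
    (((j + 1)/Δ * w) % s = s - 1 ↔ j = q - 1) := by
  obtain ⟨hx, hy, hs, hN, hΔp, hΔq⟩ := basics hp hq hΔ hxd hyd hsd
  have hdvd : Δ ∣ j + 1 := by
    refine ⟨j / Δ + 1, ?_⟩
    have a1 := Nat.div_add_mod j Δ
    have a2 : Δ * (j / Δ + 1) = Δ * (j / Δ) + Δ := by ring
    omega
  set A := (j + 1) / Δ with hA
  have hAΔ : A * Δ = j + 1 := Nat.div_mul_cancel hdvd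
  have hA1 : 1 ≤ A := by
    rcases Nat.eq_zero_or_pos A with h | h
    · rw [h] at hAΔ; simp at hAΔ
    · exact h
  have hAs : A < s := by
    by_contra h
    push_neg at h
    have : s * Δ ≤ A * Δ := Nat.mul_le_mul_right Δ h
    omega
  set t := (A * w) % s with ht
  have ht1 : 1 ≤ t := by
    rcases Nat.eq_zero_or_pos t with h | h
    · exfalso
      have hz : (0 : ℕ) * w % s = 0 := by simp
      have := cancel_w hw (A := A) (B := 0) (by rw [← ht, h, hz])
      rw [Nat.mod_eq_of_lt hAs] at this
      simp at this
      omega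
    · exact h
  have hts : t < s := Nat.mod_lt _ (by omega)
  have hys : y < s := by omega
  refine ⟨hAΔ, hA1, hAs, ht1, hts, ?_, ?_⟩
  · intro h
    have hyw : y * w % s = s - 1 := yw_val hsd hw hs
    have := cancel_w hw (A := A) (B := y) (by rw [← ht, h, hyw])
    rw [Nat.mod_eq_of_lt hAs, Nat.mod_eq_of_lt hys] at this
    subst this
    omega
  · intro h
    have hAy : A = y := by
      have : A * Δ = y * Δ := by omega
      exact Nat.eq_of_mul_eq_mul_right hΔ this
    rw [ht, hAy]
    exact yw_val hsd hw hs

end cycle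

private def fodd (Δ s w : ℕ) (j : ℕ) : ℚ :=
  if j % Δ = Δ - 1 then (-1:ℚ)^(((j + 1)/Δ * w) % s) else 0

section cycle2

variable {p q Δ x y s w : ℕ}
variable (hp : 2 ≤ p) (hq : 2 ≤ q) (hΔ : 0 < Δ)
  (hxd : x * Δ = p) (hyd : y * Δ = q) (hsd : s = x + y) (hw : x * w % s = 1)

include hp hq hΔ hxd hyd hsd hw in
private lemma odd_f_R1 {j : ℕ} (hj1 : j + 1 < q) :
    fodd Δ s w (j + p) = - fodd Δ s w j := by
  obtain ⟨hx, hy, hs, hN, hΔp, hΔq⟩ := basics hp hq hΔ hxd hyd hsd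
  have hmod : (j + p) % Δ = j % Δ := by
    have := mod_class_p hxd j 1
    rw [one_mul] at this
    exact this
  by_cases hcl : j % Δ = Δ - 1
  · obtain ⟨hAΔ, hA1, hAs, ht1, hts, htiff⟩ :=
      tfacts hp hq hΔ hxd hyd hsd hw (by omega) hcl
    have hne : j ≠ q - 1 := by omega
    have htne : ((j + 1)/Δ * w) % s ≠ s - 1 := fun h => hne (htiff.1 h)
    have hdiv : (j + p + 1)/Δ = (j + 1)/Δ + x := by
      rw [show j + p + 1 = (j + 1) + x * Δ from by omega, Nat.add_mul_div_right _ x hΔ]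
    rw [fodd, fodd, if_pos (by rw [hmod]; exact hcl), if_pos hcl, hdiv]
    have hexp : (((j + 1)/Δ + x) * w) % s = ((j + 1)/Δ * w) % s + 1 := by
      rw [add_mul, Nat.add_mod, hw]
      exact Nat.mod_eq_of_lt (by omega)
    rw [hexp, pow_succ]
    ring
  · rw [fodd, fodd, if_neg (by rw [hmod]; exact hcl), if_neg hcl]
    simp

include hp hq hΔ hxd hyd hsd hw in
private lemma odd_f_R3 {j : ℕ} (hjq : q ≤ j) (hj : j + 1 < p + q) :
    fodd Δ s w (j - q) = - fodd Δ s w j := by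
  obtain ⟨hx, hy, hs, hN, hΔp, hΔq⟩ := basics hp hq hΔ hxd hyd hsd
  have hmod : (j - q) % Δ = j % Δ := by
    conv_rhs => rw [show j = (j - q) + y * Δ from by omega]
    rw [Nat.add_mul_mod_self_right]
  by_cases hcl : j % Δ = Δ - 1
  · obtain ⟨hAΔ, hA1, hAs, ht1, hts, htiff⟩ :=
      tfacts hp hq hΔ hxd hyd hsd hw hj hcl
    have hne : j ≠ q - 1 := by omega
    have htne : ((j + 1)/Δ * w) % s ≠ s - 1 := fun h => hne (htiff.1 h)
    have hyq : y = q / Δ := by rw [← hyd, Nat.mul_div_cancel _ hΔ]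
    have hyA : y ≤ (j + 1)/Δ := by
      rw [hyq]
      exact Nat.div_le_div_right (by omega)
    have hdiv : (j - q + 1)/Δ = (j + 1)/Δ - y := by
      have hq' : Δ * y = q := by rw [mul_comm]; exact hyd
      rw [show j - q + 1 = (j + 1) - Δ * y from by omega,
        Nat.sub_mul_div _ _ _]
    rw [fodd, fodd, if_pos (by rw [hmod]; exact hcl), if_pos hcl, hdiv]
    have hexp : (((j + 1)/Δ - y) * w) % s = ((j + 1)/Δ * w) % s + 1 := by
      have e1 : ((j + 1)/Δ - y) * w + y * w = (j + 1)/Δ * w := by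
        rw [← add_mul]
        congr 1
        omega
      have e2 : ((j + 1)/Δ - y) * w % s = (((j + 1)/Δ - y) * w + s * w) % s :=
        (Nat.add_mul_mod_self_left _ s w).symm
      have e3 : s * w = x * w + y * w := by rw [hsd]; ring
      rw [e2, show ((j + 1)/Δ - y) * w + s * w = (j + 1)/Δ * w + x * w from by omega,
        Nat.add_mod, hw]
      exact Nat.mod_eq_of_lt (by omega)
    rw [hexp, pow_succ]
    ring
  · rw [fodd, fodd, if_neg (by rw [hmod]; exact hcl), if_neg hcl]
    simp

include hp hq hΔ hxd hyd hsd hw in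
private lemma odd_f_R2 (hs2 : s % 2 = 1) :
    fodd Δ s w (q - 1) = - fodd Δ s w (p - 1) := by
  obtain ⟨hx, hy, hs, hN, hΔp, hΔq⟩ := basics hp hq hΔ hxd hyd hsd
  have hclq : (q - 1) % Δ = Δ - 1 := by rw [← hyd]; exact lastmod hΔ hy
  have hclp : (p - 1) % Δ = Δ - 1 := by rw [← hxd]; exact lastmod hΔ hx
  have hdq : (q - 1 + 1)/Δ = y := by
    rw [show q - 1 + 1 = y * Δ from by omega, Nat.mul_div_cancel _ hΔ]
  have hdp : (p - 1 + 1)/Δ = x := by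
    rw [show p - 1 + 1 = x * Δ from by omega, Nat.mul_div_cancel _ hΔ]
  rw [fodd, fodd, if_pos hclq, if_pos hclp, hdq, hdp, hw,
    yw_val hsd hw hs, Even.neg_one_pow (Nat.even_iff.2 (by omega))]
  norm_num

end cycle2
private def sig (a c : ℕ) (i : Fin (a + 1 + c)) : Fin (a + 1 + c) :=
  if h : i.1 < c then ⟨i.1 + a + 1, by omega⟩
  else if h2 : i.1 = c then ⟨a, by omega⟩
  else ⟨i.1 - (c + 1), by have := i.2; omega⟩

private lemma wMat_apply (a c : ℕ) (i j : Fin (a + 1 + c)) :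
    wMat a 1 c 1 1 1 i j =
      (if i = j then (1:ℚ) else 0) + (if j = sig a c i then 1 else 0) := by
  rw [wMat, Matrix.add_apply, Matrix.one_apply, Matrix.of_apply]
  refine congrArg (fun t => (if i = j then (1:ℚ) else 0) + t) ?_
  rcases i with ⟨iv, hi⟩
  rcases j with ⟨jv, hj⟩
  by_cases h1 : iv < c
  · rw [sig, dif_pos h1]
    simp only [Fin.mk.injEq]
    split_ifs <;> first | rfl | omega
  · by_cases h2 : iv = c
    · rw [sig, dif_neg h1, dif_pos h2]
      simp only [Fin.mk.injEq]
      split_ifs <;> first | rfl | omega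
    · rw [sig, dif_neg h1, dif_neg h2]
      simp only [Fin.mk.injEq]
      split_ifs <;> first | rfl | omega

private lemma ker_iff (a c : ℕ) (v : Fin (a + 1 + c) → ℚ) :
    v ∈ LinearMap.ker (Matrix.toLin' (wMat a 1 c 1 1 1)) ↔
      ∀ i, v i + v (sig a c i) = 0 := by
  rw [LinearMap.mem_ker, Matrix.toLin'_apply]
  have key : ∀ i, (wMat a 1 c 1 1 1).mulVec v i = v i + v (sig a c i) := by
    intro i
    have h1 : (wMat a 1 c 1 1 1).mulVec v i =
        ∑ j, ((if i = j then (1:ℚ) else 0) + (if j = sig a c i then 1 else 0)) * v j := by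
      simp only [Matrix.mulVec, dotProduct, wMat_apply]
    rw [h1]
    simp only [add_mul, ite_mul, one_mul, zero_mul]
    rw [Finset.sum_add_distrib, Finset.sum_ite_eq, Finset.sum_ite_eq']
    simp
  constructor
  · intro h i
    rw [← key i, h]
    rfl
  · intro h
    funext i
    rw [Pi.zero_apply, key i, h i]

private def Lmap (n Δ : ℕ) : (Fin (Δ - 1) → ℚ) →ₗ[ℚ] (Fin n → ℚ) where
  toFun wv := fun j =>
    (-1 : ℚ)^(j.1 / Δ) * (if h : j.1 % Δ < Δ - 1 then wv ⟨j.1 % Δ, h⟩ else 0)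
  map_add' wv1 wv2 := by
    funext j
    by_cases h : j.1 % Δ < Δ - 1 <;> simp [h] <;> ring
  map_smul' m wv := by
    funext j
    by_cases h : j.1 % Δ < Δ - 1 <;> simp [h] <;> ring

private lemma Lmap_apply (n Δ : ℕ) (wv : Fin (Δ - 1) → ℚ) (j : Fin n) :
    Lmap n Δ wv j =
      (-1 : ℚ)^(j.1 / Δ) * (if h : j.1 % Δ < Δ - 1 then wv ⟨j.1 % Δ, h⟩ else 0) := rfl


private lemma sig_lt (a c : ℕ) {i : Fin (a + 1 + c)} (h : i.1 < c) :
    sig a c i = ⟨i.1 + a + 1, by omega⟩ := by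
  rw [sig, dif_pos h]

private lemma sig_eq (a c : ℕ) {i : Fin (a + 1 + c)} (h : i.1 = c) :
    sig a c i = ⟨a, by omega⟩ := by
  rw [sig, dif_neg (by omega), dif_pos h]

private lemma sig_gt (a c : ℕ) {i : Fin (a + 1 + c)} (h : c < i.1) :
    sig a c i = ⟨i.1 - (c + 1), by have := i.2; omega⟩ := by
  rw [sig, dif_neg (by omega), dif_neg (by omega)]

private def uf (a c : ℕ) (v : Fin (a + 1 + c) → ℚ) (j : ℕ) : ℚ :=
  if h : j < a + 1 + c then v ⟨j, h⟩ else 0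

private lemma u_relations (a c : ℕ) (ha : 1 ≤ a) (hc : 1 ≤ c)
    (v : Fin (a + 1 + c) → ℚ) (hv : ∀ i, v i + v (sig a c i) = 0) :
    (∀ j, j + 1 < c + 1 → uf a c v j + uf a c v (j + (a + 1)) = 0) ∧
    (uf a c v (c + 1 - 1) + uf a c v (a + 1 - 1) = 0) ∧
    (∀ j, c + 1 ≤ j → j + 1 < (a + 1) + (c + 1) →
      uf a c v j + uf a c v (j - (c + 1)) = 0) := by
  refine ⟨?_, ?_, ?_⟩
  · intro j hj
    have h1 : j < a + 1 + c := by omega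
    have h2 : j + (a + 1) < a + 1 + c := by omega
    have h3 := hv ⟨j, h1⟩
    rw [sig_lt a c (show (⟨j, h1⟩ : Fin (a + 1 + c)).1 < c from by simpa using by omega)] at h3
    rw [uf, uf, dif_pos h1, dif_pos h2]
    exact h3
  · have h3 := hv ⟨c, by omega⟩
    rw [sig_eq a c rfl] at h3
    rw [uf, uf, dif_pos (show c + 1 - 1 < a + 1 + c from by omega),
      dif_pos (show a + 1 - 1 < a + 1 + c from by omega)]
    exact h3
  · intro j hj1 hj2
    have h1 : j < a + 1 + c := by omega
    have h2 : j - (c + 1) < a + 1 + c := by omega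
    have h3 := hv ⟨j, h1⟩
    rw [sig_gt a c (show c < (⟨j, h1⟩ : Fin (a + 1 + c)).1 from by simpa using by omega)] at h3
    rw [uf, uf, dif_pos h1, dif_pos h2]
    exact h3

theorem corank_wMat_b_one (a c : ℕ) (ha : 1 ≤ a) (hc : 1 ≤ c) :
    corank (wMat a 1 c 1 1 1) =
      if ((a + 1) / Nat.gcd (a + 1) (c + 1) + (c + 1) / Nat.gcd (a + 1) (c + 1)) % 2 = 0
      then Nat.gcd (a + 1) (c + 1) - 1
      else 1 := by
  have hΔ : 0 < Nat.gcd (a + 1) (c + 1) := Nat.gcd_pos_of_pos_left _ (by omega)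
  set Δ := Nat.gcd (a + 1) (c + 1) with hΔdef
  set x := (a + 1) / Δ with hxdef
  set y := (c + 1) / Δ with hydef
  have hxd : x * Δ = a + 1 := Nat.div_mul_cancel (Nat.gcd_dvd_left _ _)
  have hyd : y * Δ = c + 1 := Nat.div_mul_cancel (Nat.gcd_dvd_right _ _)
  have hp : 2 ≤ a + 1 := by omega
  have hq : 2 ≤ c + 1 := by omega
  obtain ⟨hx1, hy1, hsge, hN, hΔp, hΔq⟩ := basics hp hq hΔ hxd hyd rfl
  have hco : Nat.Coprime x y := Nat.coprime_div_gcd_div_gcd hΔ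
  have hcos : Nat.Coprime x (x + y) := by
    show Nat.gcd x (x + y) = 1
    rw [add_comm, Nat.gcd_add_self_right]
    exact hco
  obtain ⟨w, hw⟩ : ∃ w, x * w % (x + y) = 1 :=
    by obtain ⟨m, -, hm⟩ := Nat.exists_mul_mod_eq_one_of_coprime hcos (by omega); exact ⟨m, hm⟩
  by_cases hpar : (x + y) % 2 = 0
  · -- even case: kernel = range of Lmap
    rw [if_pos hpar]
    have hx2 : x % 2 = 1 := by
      by_contra h
      have h2x : (2:ℕ) ∣ x := by omega
      have h2y : (2:ℕ) ∣ y := by omega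
      have h12 := Nat.dvd_gcd h2x h2y
      rw [Nat.Coprime.gcd_eq_one hco] at h12
      norm_num at h12
    have hy2 : y % 2 = 1 := by omega
    have hinj : Function.Injective (Lmap (a + 1 + c) Δ) := by
      intro w1 w2 h
      funext r
      have h0 := congrFun h ⟨r.1, by have := r.2; omega⟩
      rw [Lmap_apply, Lmap_apply] at h0
      have hr1 : r.1 < Δ - 1 := r.2
      simp only [Fin.val_mk] at h0
      rw [Nat.div_eq_of_lt (by omega), Nat.mod_eq_of_lt (by omega)] at h0
      rw [dif_pos hr1, dif_pos hr1] at h0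
      simpa using h0
    have hrange : LinearMap.range (Lmap (a + 1 + c) Δ) =
        LinearMap.ker (Matrix.toLin' (wMat a 1 c 1 1 1)) := by
      apply le_antisymm
      · rintro v ⟨wv, rfl⟩
        rw [ker_iff]
        intro i
        by_cases h1 : i.1 < c
        · rw [sig_lt a c h1, Lmap_apply, Lmap_apply]
          show (-1:ℚ)^(i.1/Δ) * (if h : i.1 % Δ < Δ - 1 then wv ⟨i.1 % Δ, h⟩ else 0) +
            (-1:ℚ)^((i.1 + a + 1)/Δ) *
              (if h : (i.1 + a + 1) % Δ < Δ - 1 then wv ⟨(i.1 + a + 1) % Δ, h⟩ else 0) = 0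
          have e1 : (-1:ℚ)^((i.1 + a + 1)/Δ) *
              (if h : (i.1 + a + 1) % Δ < Δ - 1 then wv ⟨(i.1 + a + 1) % Δ, h⟩ else 0) =
              -((-1:ℚ)^(i.1/Δ) * (if h : i.1 % Δ < Δ - 1 then wv ⟨i.1 % Δ, h⟩ else 0)) :=
            even_g_R1 hΔ hxd hx2 (fun m => if h : m < Δ - 1 then wv ⟨m, h⟩ else 0) i.1
          rw [e1]; ring
        · by_cases h2 : i.1 = c
          · rw [sig_eq a c h2, Lmap_apply, Lmap_apply]
            show (-1:ℚ)^(i.1/Δ) * (if h : i.1 % Δ < Δ - 1 then wv ⟨i.1 % Δ, h⟩ else 0) +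
              (-1:ℚ)^(a/Δ) * (if h : a % Δ < Δ - 1 then wv ⟨a % Δ, h⟩ else 0) = 0
            have e1 : (-1:ℚ)^(c/Δ) * (if h : c % Δ < Δ - 1 then wv ⟨c % Δ, h⟩ else 0) = 0 := by
              have e0 := even_g_class0 hΔ
                (fun m => if h : m < Δ - 1 then wv ⟨m, h⟩ else 0) (by simp) hy1
              rw [show y * Δ - 1 = c from by omega] at e0
              exact e0
            have e2 : (-1:ℚ)^(a/Δ) * (if h : a % Δ < Δ - 1 then wv ⟨a % Δ, h⟩ else 0) = 0 := by
              have e0 := even_g_class0 hΔ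
                (fun m => if h : m < Δ - 1 then wv ⟨m, h⟩ else 0) (by simp) hx1
              rw [show x * Δ - 1 = a from by omega] at e0
              exact e0
            rw [h2, e1, e2]
            norm_num
          · rw [sig_gt a c (by omega), Lmap_apply, Lmap_apply]
            show (-1:ℚ)^(i.1/Δ) * (if h : i.1 % Δ < Δ - 1 then wv ⟨i.1 % Δ, h⟩ else 0) +
              (-1:ℚ)^((i.1 - (c+1))/Δ) *
                (if h : (i.1 - (c+1)) % Δ < Δ - 1 then wv ⟨(i.1 - (c+1)) % Δ, h⟩ else 0) = 0
            have e1 : (-1:ℚ)^((i.1 - (c+1))/Δ) *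
                (if h : (i.1 - (c+1)) % Δ < Δ - 1 then wv ⟨(i.1 - (c+1)) % Δ, h⟩ else 0) =
                -((-1:ℚ)^(i.1/Δ) * (if h : i.1 % Δ < Δ - 1 then wv ⟨i.1 % Δ, h⟩ else 0)) :=
              even_g_R3 hΔ hyd hy2 (fun m => if h : m < Δ - 1 then wv ⟨m, h⟩ else 0)
                (show c + 1 ≤ i.1 from by omega)
            rw [e1]; ring
      · intro v hv
        rw [ker_iff] at hv
        obtain ⟨hR1, hR2, hR3⟩ := u_relations a c ha hc v hv
        refine ⟨fun r => v ⟨r.1, by have := r.2; omega⟩, ?_⟩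
        funext j
        rw [Lmap_apply]
        have hju : v j = uf a c v j.1 := by simp [uf]
        by_cases hcl : j.1 % Δ < Δ - 1
        · rw [dif_pos hcl]
          have hf := even_formula hp hq hΔ hxd hyd rfl hw hpar (uf a c v) hR1 hR3
            (j := j.1) (by have := j.2; omega) (by omega)
          rw [hju, hf]
          congr 1
          rw [uf, dif_pos (show j.1 % Δ < a + 1 + c from by omega)]
        · rw [dif_neg hcl, mul_zero]
          have hcl2 : j.1 % Δ = Δ - 1 := by
            have : j.1 % Δ < Δ := Nat.mod_lt _ hΔ
            omega
          rw [hju]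
          exact (class_vanish_even hp hq hΔ hxd hyd rfl hw hpar (uf a c v) hR1 hR2 hR3
            (by have := j.2; omega) hcl2).symm
    rw [corank, ← hrange, LinearMap.finrank_range_of_inj hinj, Module.finrank_pi,
      Fintype.card_fin]
  · -- odd case: kernel = span of v0
    rw [if_neg hpar]
    have hs2 : (x + y) % 2 = 1 := by omega
    set v0 : Fin (a + 1 + c) → ℚ := fun j => fodd Δ (x + y) w j.1 with hv0def
    have hv0ne : v0 ≠ 0 := by
      intro h
      have h0 : fodd Δ (x + y) w (Δ - 1) = 0 := by
        have := congrFun h ⟨Δ - 1, by omega⟩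
        simpa [hv0def] using this
      rw [fodd, if_pos (Nat.mod_eq_of_lt (by omega))] at h0
      exact pow_ne_zero _ (by norm_num) h0
    have hspan : Submodule.span ℚ {v0} =
        LinearMap.ker (Matrix.toLin' (wMat a 1 c 1 1 1)) := by
      apply le_antisymm
      · rw [Submodule.span_le, Set.singleton_subset_iff, SetLike.mem_coe, ker_iff]
        intro i
        by_cases h1 : i.1 < c
        · rw [sig_lt a c h1]
          show fodd Δ (x + y) w i.1 + fodd Δ (x + y) w (i.1 + a + 1) = 0
          have e1 : fodd Δ (x + y) w (i.1 + a + 1) = - fodd Δ (x + y) w i.1 :=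
            odd_f_R1 hp hq hΔ hxd hyd rfl hw (by omega)
          rw [e1]; ring
        · by_cases h2 : i.1 = c
          · rw [sig_eq a c h2]
            show fodd Δ (x + y) w i.1 + fodd Δ (x + y) w a = 0
            have e1 : fodd Δ (x + y) w c = - fodd Δ (x + y) w a :=
              odd_f_R2 hp hq hΔ hxd hyd rfl hw hs2
            rw [h2, e1]; ring
          · rw [sig_gt a c (by omega)]
            show fodd Δ (x + y) w i.1 + fodd Δ (x + y) w (i.1 - (c + 1)) = 0
            have e1 : fodd Δ (x + y) w (i.1 - (c + 1)) = - fodd Δ (x + y) w i.1 :=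
              odd_f_R3 hp hq hΔ hxd hyd rfl hw (by omega) (by have := i.2; omega)
            rw [e1]; ring
      · intro v hv
        rw [ker_iff] at hv
        obtain ⟨hR1, hR2, hR3⟩ := u_relations a c ha hc v hv
        rw [Submodule.mem_span_singleton]
        refine ⟨-(uf a c v (a + 1 - 1)), ?_⟩
        funext j
        rw [Pi.smul_apply, smul_eq_mul]
        have hju : v j = uf a c v j.1 := by simp [uf]
        by_cases hcl : j.1 % Δ = Δ - 1
        · have hf := class_formula hp hq hΔ hxd hyd rfl hw (uf a c v) hR1 hR3
            (j := j.1) (by have := j.2; omega) hcl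
          obtain ⟨hAΔ, hA1, hAs, ht1, hts, htiff⟩ := tfacts hp hq hΔ hxd hyd rfl hw
            (j := j.1) (by have := j.2; omega) hcl
          show -(uf a c v (a + 1 - 1)) * fodd Δ (x + y) w j.1 = v j
          rw [fodd, if_pos hcl, hju, hf]
          have hpowt : (-1:ℚ)^((j.1 + 1) / Δ * w % (x + y)) =
              -(-1:ℚ)^((j.1 + 1) / Δ * w % (x + y) - 1) := by
            conv_lhs => rw [show (j.1 + 1) / Δ * w % (x + y) =
              ((j.1 + 1) / Δ * w % (x + y) - 1) + 1 from by omega]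
            rw [pow_succ]; ring
          rw [hpowt]; ring
        · show -(uf a c v (a + 1 - 1)) * fodd Δ (x + y) w j.1 = v j
          rw [fodd, if_neg hcl, mul_zero, hju]
          exact (nonclass_vanish_odd hp hq hΔ hxd hyd rfl hw hs2 (uf a c v) hR1 hR3
            (by have := j.2; omega) hcl).symm
    rw [corank, ← hspan, finrank_span_singleton hv0ne]

end
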